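/- Let G be a group generated by a finite set A acting on a set X, and let Γ be the Schreier graph of this action. For every finite rooted A-labelled graph (Δ, x₀) there exist a finite colour set B, a tileset Θ ⊆ B × A × B and a subset C ⊆ B such that: (1) every valid Θ-tiling τ of Γ satisfies τ(v) ∈ C for every vertex v of Γ admitting a label-preserving graph morphism (Δ, x₀) → (Γ, v); and (2) there exists a valid Θ-tiling τ of Γ such that τ(v) ∈ C holds exactly for those vertices v admitting such a morphism. -/

import Mathlib

/-- An `A`-labelled graph: a type of vertices, a type of edges, and tail/head/label maps. -/
structure LabGraph (A : Type) where
  V : Type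
  E : Type
  tail : E → V
  head : E → V
  lab : E → A

/-- `τ` is a valid `Θ`-tiling of the Schreier graph of the action of `G` on `X` with respect
to the generating set `A`. -/
def SchreierValid {G X B : Type} [Group G] [MulAction G X]
    (A : Finset G) (Θ : Set (B × G × B)) (τ : X → B) : Prop :=
  ∀ x : X, ∀ a ∈ A, (τ x, a, τ (a • x)) ∈ Θ

/-- There is a label-preserving graph morphism from the finite rooted labelled graph
`(Δ, x₀)` to the Schreier graph of the action, rooted at `v`: a vertex map sending the root
to `v` and each edge of `Δ` with label `a` to the `a`-labelled edge of the Schreier graph at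
the image of its tail. -/
def MorphismAt {G X : Type} [Group G] [MulAction G X]
    (Δ : LabGraph G) (x₀ : Δ.V) (v : X) : Prop :=
  ∃ h : Δ.V → X, h x₀ = v ∧ ∀ e : Δ.E, h (Δ.head e) = Δ.lab e • h (Δ.tail e)


inductive Col | star | u0 | u1 | u2 | u3
deriving DecidableEq

instance : Fintype Col :=
  ⟨{Col.star, Col.u0, Col.u1, Col.u2, Col.u3}, by intro x; cases x <;> simp⟩

def theta : Set (Col × Col) :=
  {p | p = (.star, .star) ∨ p = (.u0, .u1) ∨ p = (.u1, .u0) ∨ p = (.u0, .u2) ∨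
       p = (.u2, .u3) ∨ p = (.u3, .u0)}

lemma theta_star : (Col.star, Col.star) ∈ theta := Or.inl rfl

lemma theta_loop {c : Col} (h : (c, c) ∈ theta) : c = Col.star := by
  rcases h with h|h|h|h|h|h <;> (injection h with h1 h2) <;> simp_all

def pat (D : ℤ) (j : ℤ) : Col :=
  if D % 2 = 1 ∧ j = D - 2 then .u2
  else if D % 2 = 1 ∧ j = D - 1 then .u3
  else if j % 2 = 0 then .u0 else .u1

lemma pat_ne_star (D j : ℤ) : pat D j ≠ Col.star := by
  unfold pat; split_ifs <;> simp

lemma pat_even {D j : ℤ} (hD : D % 2 = 0) :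
    pat D j = if j % 2 = 0 then Col.u0 else Col.u1 := by
  unfold pat
  rw [if_neg (by rintro ⟨h,-⟩; omega), if_neg (by rintro ⟨h,-⟩; omega)]

lemma pat_odd {D j : ℤ} (hj2 : j ≠ D - 2) (hj1 : j ≠ D - 1) :
    pat D j = if j % 2 = 0 then Col.u0 else Col.u1 := by
  unfold pat
  rw [if_neg (by tauto), if_neg (by tauto)]

lemma pat_u2 {D j : ℤ} (hD : D % 2 = 1) (hj : j = D - 2) : pat D j = Col.u2 := by
  unfold pat; rw [if_pos ⟨hD, hj⟩]

lemma pat_u3 {D j : ℤ} (hD : D % 2 = 1) (hD3 : 3 ≤ D) (hj : j = D - 1) :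
    pat D j = Col.u3 := by
  unfold pat
  rw [if_neg (by rintro ⟨-, h⟩; omega), if_pos ⟨hD, hj⟩]

lemma emod2_emod {D x : ℤ} (hD : D % 2 = 0) : (x % D) % 2 = x % 2 := by
  obtain ⟨d, hd⟩ : (2:ℤ) ∣ D := Int.dvd_of_emod_eq_zero hD
  have h : x % D = x + 2 * (-(d * (x / D))) := by
    rw [Int.emod_def, hd]; ring
  rw [h, Int.add_mul_emod_self_left]

lemma pat_step {D : ℤ} (hD : D = 0 ∨ 2 ≤ D) (j : ℤ) :
    (pat D ((j - 1) % D), pat D (j % D)) ∈ theta := by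
  rcases Int.emod_two_eq_zero_or_one D with hDe | hDo
  · rw [pat_even hDe, pat_even hDe]
    have h1 : ((j-1) % D) % 2 = (j-1) % 2 := emod2_emod hDe
    have h2 : (j % D) % 2 = j % 2 := emod2_emod hDe
    simp only [h1, h2]
    rcases Int.emod_two_eq_zero_or_one j with hj | hj
    · rw [if_neg (by omega), if_pos (by omega)]; unfold theta; tauto
    · rw [if_pos (by omega), if_neg (by omega)]; unfold theta; tauto
  · have hD3 : 3 ≤ D := by omega
    obtain ⟨a, ha0, haD, hcur, hprev⟩ :
        ∃ a : ℤ, 0 ≤ a ∧ a < D ∧ j % D = a ∧ (j - 1) % D = (a - 1) % D := by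
      refine ⟨j % D, Int.emod_nonneg j (by omega), Int.emod_lt_of_pos j (by omega), rfl, ?_⟩
      rw [Int.sub_emod j 1 D, Int.sub_emod (j % D) 1 D, Int.emod_emod_of_dvd _ dvd_rfl]
    rw [hcur, hprev]
    rcases eq_or_lt_of_le ha0 with hz | hpos
    · -- a = 0, prev = D - 1
      have hp : (a - 1) % D = D - 1 := by
        rw [← hz, show (0 - 1 : ℤ) = (D - 1) + D * (-1) by ring, Int.add_mul_emod_self_left]
        exact Int.emod_eq_of_lt (by omega) (by omega)
      rw [hp, pat_u3 hDo hD3 rfl, ← hz, pat_odd (by omega) (by omega),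
          if_pos (by omega)]
      unfold theta; tauto
    · have hp : (a - 1) % D = a - 1 := Int.emod_eq_of_lt (by omega) (by omega)
      rw [hp]
      rcases eq_or_ne a (D - 2) with h1 | h1
      · rw [pat_u2 hDo h1, pat_odd (by omega) (by omega), if_pos (by omega)]
        unfold theta; tauto
      rcases eq_or_ne a (D - 1) with h1' | h1'
      · rw [pat_u3 hDo hD3 h1', pat_u2 hDo (by omega)]
        unfold theta; tauto
      · rw [pat_odd h1 h1', pat_odd (by omega) (by omega)]
        rcases Int.emod_two_eq_zero_or_one a with hae | hao
        · rw [if_neg (show ¬ (a-1) % 2 = 0 by omega), if_pos hae]; unfold theta; tauto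
        · rw [if_pos (show (a-1) % 2 = 0 by omega), if_neg (show ¬ a % 2 = 0 by omega)]
          unfold theta; tauto

lemma exists_orbit_col {G X : Type} [Group G] [MulAction G X] (s : G) :
    ∃ m : X → Col, (∀ y : X, (m (s⁻¹ • y), m y) ∈ theta) ∧
      (∀ y : X, (m y = Col.star ↔ s • y = y)) := by
  classical
  -- the subgroup of exponents stabilizing a point
  have hstab : ∀ x : X, ∃ D : ℤ, 0 ≤ D ∧ ∀ n : ℤ, s ^ n • x = x ↔ D ∣ n := by
    intro x
    let H : AddSubgroup ℤ :=
      { carrier := {n : ℤ | s ^ n • x = x}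
        zero_mem' := by simp
        add_mem' := by
          intro a b ha hb
          simp only [Set.mem_setOf_eq] at *
          rw [zpow_add, mul_smul, hb, ha]
        neg_mem' := by
          intro a ha
          simp only [Set.mem_setOf_eq] at *
          rw [zpow_neg, inv_smul_eq_iff, ha] }
    obtain ⟨a, ha⟩ := Int.subgroup_cyclic H
    refine ⟨|a|, abs_nonneg a, fun n => ?_⟩
    have h1 : s ^ n • x = x ↔ n ∈ H := Iff.rfl
    rw [h1, ha, AddSubgroup.mem_closure_singleton]
    constructor
    · rintro ⟨k, rfl⟩
      rw [zsmul_eq_mul, Int.cast_id]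
      exact (abs_dvd a _).mpr (dvd_mul_left a k)
    · intro hd
      obtain ⟨k, hk⟩ := (abs_dvd a n).mp hd
      exact ⟨k, by rw [zsmul_eq_mul, Int.cast_id, mul_comm, ← hk]⟩
  choose Df hD0 hDdvd using hstab
  -- the orbit equivalence relation
  let r : X → X → Prop := fun y z => ∃ n : ℤ, s ^ n • y = z
  have hsymm : ∀ {y z}, r y z → r z y := by
    rintro y z ⟨n, rfl⟩
    exact ⟨-n, by rw [zpow_neg, inv_smul_smul]⟩
  have htrans : ∀ {y z w}, r y z → r z w → r y w := by
    rintro y z w ⟨n, rfl⟩ ⟨k, rfl⟩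
    exact ⟨k + n, by rw [zpow_add, mul_smul]⟩
  have hre : Equivalence r := ⟨fun y => ⟨0, by simp⟩, hsymm, htrans⟩
  let st : Setoid X := ⟨r, hre⟩
  let rep : X → X := fun y => (Quotient.mk st y).out
  have hrep : ∀ y, r (rep y) y := fun y => Quotient.mk_out (s := st) y
  have hrepc : ∀ {y z}, r y z → rep y = rep z := by
    intro y z h
    show (Quotient.mk st y).out = (Quotient.mk st z).out
    rw [Quotient.sound (s := st) h]
  -- commutation
  have hcomm : ∀ (n : ℤ) (x : X), s • s ^ n • x = s ^ n • s • x := by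
    intro n x
    rw [smul_smul, smul_smul, ← zpow_add_one, ← zpow_one_add, add_comm]
  have hfix_all : ∀ y : X, s • rep y = rep y → s • y = y := by
    intro y h
    obtain ⟨n, hn⟩ := hrep y
    rw [← hn, hcomm, h]
  have hfix_none : ∀ y : X, s • rep y ≠ rep y → s • y ≠ y := by
    intro y h hy
    obtain ⟨n, hn⟩ := hrep y
    apply h
    have : s ^ n • s • rep y = s ^ n • rep y := by rw [← hcomm, hn, hy]
    exact smul_left_cancel _ this
  have hDrange : ∀ y : X, s • rep y ≠ rep y → (Df (rep y) = 0 ∨ 2 ≤ Df (rep y)) := by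
    intro y h
    have h1 : Df (rep y) ≠ 1 := by
      intro h1
      apply h
      have := (hDdvd (rep y) 1).mpr (by rw [h1])
      rwa [zpow_one] at this
    have := hD0 (rep y)
    omega
  refine ⟨fun y => if s • rep y = rep y then Col.star
    else pat (Df (rep y)) ((hrep y).choose % Df (rep y)), fun y => ?_, fun y => ?_⟩
  have main : ∀ D : ℤ, (D = 0 ∨ 2 ≤ D) → ∀ n n' : ℤ, D ∣ (n - 1) - n' →
      (pat D (n' % D), pat D (n % D)) ∈ theta := by
    intro D hD n n' hdvd
    have hmod : n' % D = (n - 1) % D := Int.modEq_iff_dvd.mpr hdvd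
    rw [hmod]
    exact pat_step hD n
  · -- edge condition
    have hrz : r (s⁻¹ • y) y := ⟨1, by rw [zpow_one, smul_inv_smul]⟩
    have hre : rep (s⁻¹ • y) = rep y := hrepc hrz
    by_cases h : s • rep y = rep y
    · have h1' : s • rep (s⁻¹ • y) = rep (s⁻¹ • y) := by rw [hre]; exact h
      beta_reduce
      rw [if_pos h1', if_pos h]
      exact theta_star
    · have h1' : ¬ s • rep (s⁻¹ • y) = rep (s⁻¹ • y) := by rw [hre]; exact h
      beta_reduce
      rw [if_neg h1', if_neg h]
      have hs1 := (hrep (s⁻¹ • y)).choose_spec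
      have hs2 := (hrep y).choose_spec
      generalize hg1 : (hrep (s⁻¹ • y)).choose = n' at hs1 ⊢
      generalize hg2 : (hrep y).choose = n at hs2 ⊢
      rw [hre] at hs1 ⊢
      apply main _ (hDrange y h)
      have hA : s ^ (n' + 1) • rep y = y := by
        rw [add_comm, zpow_add, zpow_one, mul_smul, hs1, smul_inv_smul]
      have hfixpt : s ^ (n - (n' + 1)) • rep y = rep y := by
        have he : s ^ (n - (n' + 1)) = (s ^ (n' + 1))⁻¹ * s ^ n := by
          rw [← zpow_neg, ← zpow_add, neg_add_eq_sub]
        conv_lhs => rw [he, mul_smul, hs2, ← hA]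
        exact inv_smul_smul _ _
      have h0 := (hDdvd (rep y) _).mp hfixpt
      have he2 : n - (n' + 1) = (n - 1) - n' := by ring
      rwa [he2] at h0
  · by_cases h : s • rep y = rep y
    · beta_reduce
      rw [if_pos h]
      exact ⟨fun _ => hfix_all y h, fun _ => rfl⟩
    · beta_reduce
      rw [if_neg h]
      exact ⟨fun hc => absurd hc (pat_ne_star _ _), fun hy => absurd hy (hfix_none y h)⟩

lemma word_tileset {G X : Type} [Group G] [MulAction G X] (A : Finset G) (hA : A.Nonempty)
    (w : List G) (hw : ∀ g ∈ w, g ∈ A ∨ g⁻¹ ∈ A) :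
    ∃ (B : Type) (_ : Fintype B) (Θ : Set (B × G × B)) (C : Set B),
      (∀ τ : X → B, SchreierValid A Θ τ → ∀ v : X, w.prod • v = v → τ v ∈ C) ∧
      (∃ τ : X → B, SchreierValid A Θ τ ∧ ∀ v : X, (τ v ∈ C ↔ w.prod • v = v)) := by
  classical
  obtain ⟨m, hm1, hm2⟩ := exists_orbit_col (X := X) w.prod
  let q : ℕ → G := fun i => (w.drop i).prod
  have hq0 : q 0 = w.prod := by simp [q]
  have hqk : q w.length = 1 := by simp [q]
  have hqs : ∀ i : Fin w.length, q i.1 = w.get i * q (i.1 + 1) := by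
    intro i
    show (w.drop i.1).prod = w.get i * (w.drop (i.1 + 1)).prod
    rw [List.drop_eq_getElem_cons i.isLt, List.prod_cons, List.get_eq_getElem]
  refine ⟨Fin (w.length + 1) → Col, inferInstance,
    {t | (t.1 0, t.1 (Fin.last w.length)) ∈ theta ∧
         (t.2.2 0, t.2.2 (Fin.last w.length)) ∈ theta ∧
         ∀ i : Fin w.length,
           (w.get i = t.2.1 → t.2.2 i.castSucc = t.1 i.succ) ∧
           ((w.get i)⁻¹ = t.2.1 → t.1 i.castSucc = t.2.2 i.succ)},
    {b | b (Fin.last w.length) = Col.star}, ?_, ?_⟩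
  · -- every valid tiling marks fixed points of w.prod
    intro τ hτ v hv
    have hloc : ∀ x : X, (τ x 0, τ x (Fin.last w.length)) ∈ theta := by
      intro x
      obtain ⟨a, ha⟩ := hA
      exact (hτ x a ha).1
    have key : ∀ d j : ℕ, (hj : j + d = w.length) →
        τ (q j • v) ⟨j, by omega⟩ = τ v (Fin.last w.length) := by
      intro d
      induction d with
      | zero =>
        intro j hj
        have hj' : j = w.length := by omega
        subst hj'
        rw [hqk, one_smul]
        rfl
      | succ d ih =>
        intro j hj
        have hjlt : j < w.length := by omega
        have ihj := ih (j + 1) (by omega)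
        have hmem : w.get ⟨j, hjlt⟩ ∈ w := List.get_mem w ⟨j, hjlt⟩
        have hgq : w.get ⟨j, hjlt⟩ • q (j + 1) • v = q j • v := by
          rw [← mul_smul, ← hqs ⟨j, hjlt⟩]
        rcases hw _ hmem with hga | hgi
        · have hc := (hτ (q (j + 1) • v) _ hga).2.2 ⟨j, hjlt⟩
          have h1 := hc.1 rfl
          dsimp only at h1
          rw [hgq] at h1
          exact h1.trans ihj
        · have hc := (hτ (q j • v) _ hgi).2.2 ⟨j, hjlt⟩
          have h2 := hc.2 rfl
          dsimp only at h2
          have hax : (w.get ⟨j, hjlt⟩)⁻¹ • q j • v = q (j + 1) • v := by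
            rw [← hgq, inv_smul_smul]
          rw [hax] at h2
          exact h2.trans ihj
    have hkey0 := key w.length 0 (by omega)
    rw [hq0, hv] at hkey0
    have h01 : τ v 0 = τ v (Fin.last w.length) := hkey0
    have hpair := hloc v
    rw [h01] at hpair
    exact theta_loop hpair
  · -- the exact tiling
    refine ⟨fun x => fun i => m ((q i.1)⁻¹ • x), ?_, ?_⟩
    · intro x a ha
      refine ⟨?_, ?_, ?_⟩
      · show (m ((q ((0 : Fin (w.length + 1)) : ℕ))⁻¹ • x),
              m ((q ((Fin.last w.length : Fin (w.length + 1)) : ℕ))⁻¹ • x)) ∈ theta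
        simp only [Fin.val_zero, Fin.val_last, hq0, hqk, inv_one, one_smul]
        exact hm1 x
      · show (m ((q ((0 : Fin (w.length + 1)) : ℕ))⁻¹ • (a • x)),
              m ((q ((Fin.last w.length : Fin (w.length + 1)) : ℕ))⁻¹ • (a • x))) ∈ theta
        simp only [Fin.val_zero, Fin.val_last, hq0, hqk, inv_one, one_smul]
        exact hm1 (a • x)
      intro i
      constructor
      · intro hg
        show m ((q (i.castSucc).1)⁻¹ • (a • x)) = m ((q (i.succ).1)⁻¹ • x)
        have : (q i.1)⁻¹ • (a • x) = (q (i.1 + 1))⁻¹ • x := by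
          rw [hqs i, hg, mul_inv_rev, mul_smul, inv_smul_smul]
        show m ((q i.1)⁻¹ • (a • x)) = m ((q (i.1 + 1))⁻¹ • x)
        rw [this]
      · intro hg
        show m ((q (i.castSucc).1)⁻¹ • x) = m ((q (i.succ).1)⁻¹ • (a • x))
        have : (q i.1)⁻¹ • x = (q (i.1 + 1))⁻¹ • (a • x) := by
          rw [hqs i, mul_inv_rev, hg, mul_smul]
        show m ((q i.1)⁻¹ • x) = m ((q (i.1 + 1))⁻¹ • (a • x))
        rw [this]
    · intro v
      show m ((q (Fin.last w.length).1)⁻¹ • v) = Col.star ↔ w.prod • v = v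
      have : q (Fin.last w.length).1 = 1 := hqk
      rw [this, inv_one, one_smul]
      exact hm2 v

lemma combo_tileset {G X : Type} [Group G] [MulAction G X] (A : Finset G)
    (ι : Type) [Fintype ι] (P : ι → X → Prop)
    (H : ∀ i : ι, ∃ (B : Type) (_ : Fintype B) (Θ : Set (B × G × B)) (C : Set B),
      (∀ τ : X → B, SchreierValid A Θ τ → ∀ v : X, P i v → τ v ∈ C) ∧
      (∃ τ : X → B, SchreierValid A Θ τ ∧ ∀ v : X, (τ v ∈ C ↔ P i v))) :
    ∃ (B : Type) (_ : Fintype B) (Θ : Set (B × G × B)) (C : Set B),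
      (∀ τ : X → B, SchreierValid A Θ τ → ∀ v : X, (∀ i, P i v) → τ v ∈ C) ∧
      (∃ τ : X → B, SchreierValid A Θ τ ∧ ∀ v : X, (τ v ∈ C ↔ ∀ i, P i v)) := by
  classical
  choose B fB Θ C h1 τ hτ hC using H
  letI : DecidableEq ι := Classical.decEq ι
  letI : ∀ i, Fintype (B i) := fB
  refine ⟨∀ i, B i, inferInstance,
    {t | ∀ i, (t.1 i, t.2.1, t.2.2 i) ∈ Θ i},
    {b | ∀ i, b i ∈ C i}, ?_, ?_⟩
  · intro τ' hτ' v hv i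
    exact h1 i (fun x => τ' x i) (fun x a ha => (hτ' x a ha) i) v (hv i)
  · exact ⟨fun x i => τ i x, fun x a ha i => hτ i x a ha,
      fun v => ⟨fun hb i => (hC i v).1 (hb i), fun hv i => (hC i v).2 (hv i)⟩⟩

lemma exists_word {G : Type} [Group G] (A : Finset G)
    (hA : Subgroup.closure (A : Set G) = ⊤) (g : G) :
    ∃ w : List G, (∀ x ∈ w, x ∈ A ∨ x⁻¹ ∈ A) ∧ w.prod = g := by
  have hg : g ∈ Subgroup.closure (A : Set G) := hA ▸ Subgroup.mem_top g
  induction hg using Subgroup.closure_induction with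
  | mem x hx => exact ⟨[x], by simpa using Or.inl hx, by simp⟩
  | one => exact ⟨[], by simp, by simp⟩
  | mul x y hx hy ihx ihy =>
    obtain ⟨w1, hw1, hp1⟩ := ihx
    obtain ⟨w2, hw2, hp2⟩ := ihy
    refine ⟨w1 ++ w2, ?_, by rw [List.prod_append, hp1, hp2]⟩
    intro z hz
    rcases List.mem_append.mp hz with h | h
    · exact hw1 z h
    · exact hw2 z h
  | inv x hx ih =>
    obtain ⟨w, hw, hp⟩ := ih
    refine ⟨(w.map (·⁻¹)).reverse, ?_, ?_⟩
    · intro z hz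
      rw [List.mem_reverse, List.mem_map] at hz
      obtain ⟨u, hu, rfl⟩ := hz
      rcases hw u hu with h | h
      · exact Or.inr (by simpa using h)
      · exact Or.inl h
    · rw [← hp, ← List.prod_inv_reverse]

/-- Walks in `Δ` from the root, recording the product of edge labels. -/
inductive Trace {G : Type} [Group G] (Δ : LabGraph G) (x₀ : Δ.V) : Δ.V → G → Prop
  | base : Trace Δ x₀ x₀ 1
  | fwd (e : Δ.E) (g : G) : Trace Δ x₀ (Δ.tail e) g → Trace Δ x₀ (Δ.head e) (Δ.lab e * g)
  | bwd (e : Δ.E) (g : G) : Trace Δ x₀ (Δ.head e) g → Trace Δ x₀ (Δ.tail e) ((Δ.lab e)⁻¹ * g)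

lemma trace_spec {G X : Type} [Group G] [MulAction G X] {Δ : LabGraph G} {x₀ : Δ.V}
    {u : Δ.V} {g : G} (ht : Trace Δ x₀ u g) (v : X) (h : Δ.V → X) (hroot : h x₀ = v)
    (hedge : ∀ e : Δ.E, h (Δ.head e) = Δ.lab e • h (Δ.tail e)) :
    h u = g • v := by
  induction ht with
  | base => rw [hroot, one_smul]
  | fwd e g hgt ih => rw [hedge e, ih, mul_smul]
  | bwd e g hgt ih =>
    have h2 : (Δ.lab e)⁻¹ • h (Δ.head e) = h (Δ.tail e) := by
      rw [hedge e, inv_smul_smul]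
    rw [mul_smul, ← ih, h2]


/-- **Local configurations may be marked by a tileset** (Lemma 2.3).  Let `Γ` be the
Schreier graph of a group `G` generated by a finite set `A` acting on `X`.  For every
finite rooted `A`-labelled graph `(Δ, x₀)` there are a finite colour set `B`, a tileset
`Θ ⊆ B × A × B` and a subset `C ⊆ B` such that (1) in every valid `Θ`-tiling, all vertices
`v` admitting a morphism `(Δ, x₀) → (Γ, v)` are coloured in `C`, and (2) some valid
`Θ`-tiling colours in `C` exactly those vertices. -/
theorem localmark
    {G X : Type} [Group G] [MulAction G X]
    (A : Finset G) (hA : Subgroup.closure (A : Set G) = ⊤)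
    (Δ : LabGraph G) (hVfin : Finite Δ.V) (hEfin : Finite Δ.E)
    (hlab : ∀ e : Δ.E, Δ.lab e ∈ A) (x₀ : Δ.V) :
    ∃ (B : Type) (_ : Fintype B) (Θ : Set (B × G × B)) (C : Set B),
      (∀ τ : X → B, SchreierValid A Θ τ →
        ∀ v : X, MorphismAt Δ x₀ v → τ v ∈ C) ∧
      (∃ τ : X → B, SchreierValid A Θ τ ∧
        ∀ v : X, (τ v ∈ C ↔ MorphismAt Δ x₀ v)) := by
  classical
  -- Case: no vertex admits a morphism.
  by_cases hever : ∃ v : X, MorphismAt Δ x₀ v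
  swap
  · refine ⟨PUnit, inferInstance, Set.univ, ∅, ?_, ?_⟩
    · intro τ _ v hv
      exact absurd ⟨v, hv⟩ hever
    · exact ⟨fun _ => PUnit.unit, fun _ _ _ => trivial,
        fun v => ⟨fun h => h.elim, fun hv => absurd ⟨v, hv⟩ hever⟩⟩
  obtain ⟨v₀, h₀, hroot₀, hedge₀⟩ := hever
  -- Case: A is empty (so there are no edges and every vertex admits a morphism).
  by_cases hAne : A.Nonempty
  swap
  · have hEempty : IsEmpty Δ.E := by
      rw [Finset.not_nonempty_iff_eq_empty] at hAne
      refine ⟨fun e => ?_⟩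
      have := hlab e
      simp [hAne] at this
    refine ⟨PUnit, inferInstance, Set.univ, Set.univ, fun _ _ _ _ => trivial, ?_⟩
    refine ⟨fun _ => PUnit.unit, fun _ _ _ => trivial, fun v => ⟨fun _ => ?_, fun _ => trivial⟩⟩
    exact ⟨fun _ => v, rfl, fun e => hEempty.elim e⟩
  -- Main case.
  -- the set of root-connected vertices
  set K : Set Δ.V := {u | ∃ g : G, Trace Δ x₀ u g} with hK
  have hKx₀ : x₀ ∈ K := ⟨1, Trace.base⟩
  -- a choice of trace element for each vertex
  let gf : Δ.V → G := fun u => if h : ∃ g : G, Trace Δ x₀ u g then h.choose else 1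
  have hgf : ∀ u ∈ K, Trace Δ x₀ u (gf u) := by
    intro u hu
    have : gf u = hu.choose := dif_pos hu
    rw [this]
    exact hu.choose_spec
  -- the finite set of relator elements
  letI : Fintype Δ.E := Fintype.ofFinite Δ.E
  set f : Δ.E → G := fun e =>
    if Δ.tail e ∈ K then (gf (Δ.head e))⁻¹ * Δ.lab e * gf (Δ.tail e) else 1 with hf
  set F : Finset G := insert (gf x₀) (Finset.image f Finset.univ) with hF
  -- the characterization of MorphismAt by fixed-point equations
  have hchar : ∀ v : X, MorphismAt Δ x₀ v ↔ ∀ s ∈ F, s • v = v := by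
    intro v
    constructor
    · rintro ⟨h, hroot, hedge⟩ s hs
      rw [hF, Finset.mem_insert] at hs
      rcases hs with rfl | hs
      · rw [← trace_spec (hgf x₀ hKx₀) v h hroot hedge, hroot]
      · obtain ⟨e, -, rfl⟩ := Finset.mem_image.mp hs
        rw [hf]
        dsimp only
        by_cases he : Δ.tail e ∈ K
        · rw [if_pos he]
          have hhd : Δ.head e ∈ K := by
            obtain ⟨g, hg⟩ := he
            exact ⟨Δ.lab e * g, Trace.fwd e g hg⟩
          have h1 := trace_spec (hgf _ he) v h hroot hedge
          have h2 := trace_spec (hgf _ hhd) v h hroot hedge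
          rw [mul_smul, mul_smul, ← h1, ← hedge e, h2, inv_smul_smul]
        · rw [if_neg he, one_smul]
    · intro hfix
      have hgx₀ : gf x₀ • v = v := hfix _ (Finset.mem_insert_self _ _)
      refine ⟨fun u => if u ∈ K then gf u • v else h₀ u, by beta_reduce; rw [if_pos hKx₀]; exact hgx₀, ?_⟩
      intro e
      by_cases he : Δ.tail e ∈ K
      · have hhd : Δ.head e ∈ K := by
          obtain ⟨g, hg⟩ := he
          exact ⟨Δ.lab e * g, Trace.fwd e g hg⟩
        beta_reduce
        rw [if_pos he, if_pos hhd]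
        have hfe : f e • v = v := hfix _ (Finset.mem_insert_of_mem
          (Finset.mem_image.mpr ⟨e, Finset.mem_univ e, rfl⟩))
        rw [hf] at hfe
        dsimp only at hfe
        rw [if_pos he] at hfe
        rw [mul_smul, mul_smul] at hfe
        calc gf (Δ.head e) • v
            = gf (Δ.head e) • (gf (Δ.head e))⁻¹ • Δ.lab e • gf (Δ.tail e) • v := by rw [hfe]
          _ = Δ.lab e • gf (Δ.tail e) • v := by rw [smul_inv_smul]
      · have hhd : Δ.head e ∉ K := by
          intro hcon
          apply he
          obtain ⟨g, hg⟩ := hcon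
          exact ⟨(Δ.lab e)⁻¹ * g, Trace.bwd e g hg⟩
        beta_reduce
        rw [if_neg he, if_neg hhd]
        exact hedge₀ e
  -- build tilesets for each relator and combine
  have hword : ∀ s : {x // x ∈ F}, ∃ w : List G, (∀ x ∈ w, x ∈ A ∨ x⁻¹ ∈ A) ∧ w.prod = s.1 :=
    fun s => exists_word A hA s.1
  choose wd hwd hwp using hword
  have H := fun s : {x // x ∈ F} => word_tileset (X := X) A hAne (wd s) (hwd s)
  obtain ⟨B, fB, Θ, C, hmark, hexact⟩ :=
    combo_tileset A {x // x ∈ F} (fun s v => (wd s).prod • v = v) H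
  refine ⟨B, fB, Θ, C, ?_, ?_⟩
  · intro τ hτ v hv
    apply hmark τ hτ v
    intro s
    rw [hwp s]
    exact (hchar v).mp hv (s.1) s.2
  · obtain ⟨τ, hτ, hC⟩ := hexact
    refine ⟨τ, hτ, fun v => ?_⟩
    rw [hC v, hchar v]
    constructor
    · intro h s hs
      have := h ⟨s, hs⟩
      rwa [hwp ⟨s, hs⟩] at this
    · intro h s
      rw [hwp s]
      exact h s.1 s.2
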